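/- Let d ≥ 1, let Γ ⊆ ℝ^d be a nonempty closed set, and let η : Γ → ℝ be continuous, bounded and strictly positive, satisfying: for every ε ∈ (0,1/2) and all p, p̃ ∈ Γ with |p − p̃| < ε·η(p), one has (1−ε)·η(p) ≤ η(p̃) ≤ ((1−ε)/(1−2ε))·η(p). For an integer K ≥ 2 set η̃ := 2^{−K}·η. Then for every C ∈ (0,1) there exists a countable family of points (p_k)_{k∈ℕ} ⊆ Γ such that: (i) Γ ⊆ ⋃_k B(p_k, η̃(p_k)); (ii) the family of balls is locally finite, i.e. every bounded subset of ℝ^d intersects only finitely many of the balls B(p_k, η̃(p_k)); and (iii) whenever i ≠ k and B(p_i, η̃(p_i)) ∩ B(p_k, η̃(p_k)) ≠ ∅, one has ((2^{K−1}−1)/2^{K−1})·η̃(p_i) ≤ η̃(p_k) ≤ (2^{K−1}/(2^{K−1}−1))·η̃(p_i) and C·max{η̃(p_i), η̃(p_k)} ≤ |p_i − p_k| ≤ ((2^K−1)/(2^{K−1}−1))·min{η̃(p_i), η̃(p_k)}. -/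

import Mathlib

open Metric Set

namespace Stmt3Aux

variable {X : Type*} [MetricSpace X]

lemma finite_of_separated [ProperSpace X] {s : Set X} {ε : ℝ} (hε : 0 < ε)
    (hb : Bornology.IsBounded s)
    (hsep : ∀ x ∈ s, ∀ y ∈ s, x ≠ y → ε ≤ dist x y) : s.Finite := by
  classical
  by_contra hinf
  have hinf : s.Infinite := hinf
  obtain ⟨c, -⟩ := hinf.nonempty
  obtain ⟨R, hR⟩ := (Metric.isBounded_iff_subset_closedBall c).1 hb
  have htb : TotallyBounded s :=
    ((isCompact_closedBall c R).totallyBounded).subset hR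
  obtain ⟨t, htfin, hts⟩ := Metric.totallyBounded_iff.1 htb (ε/2) (by linarith)
  have hmem : ∀ x ∈ s, ∃ y ∈ t, dist x y < ε/2 := by
    intro x hx
    have := hts hx
    simp only [Set.mem_iUnion, Metric.mem_ball] at this
    obtain ⟨y, hy, hxy⟩ := this
    exact ⟨y, hy, hxy⟩
  set f : X → X := fun x => if hx : ∃ y ∈ t, dist x y < ε/2 then hx.choose else c with hf
  have hfspec : ∀ x ∈ s, f x ∈ t ∧ dist x (f x) < ε/2 := by
    intro x hx
    have h := hmem x hx
    simp only [hf, dif_pos h]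
    exact ⟨h.choose_spec.1, h.choose_spec.2⟩
  have hmaps : Set.MapsTo f s t := fun x hx => (hfspec x hx).1
  obtain ⟨x, hx, y, hy, hne, heq⟩ := hinf.exists_ne_map_eq_of_mapsTo hmaps htfin
  have h1 := (hfspec x hx).2
  have h2 := (hfspec y hy).2
  have : dist x y < ε := by
    calc dist x y ≤ dist x (f x) + dist (f x) y := dist_triangle _ _ _
    _ = dist x (f x) + dist y (f y) := by rw [heq, dist_comm (f y) y]
    _ < ε := by linarith
  exact absurd (hsep x hx y hy hne) (not_le.2 this)

lemma chain {C rM D : ℝ} (hC0 : 0 < C) (hC1 : C < 1) (hD : 0 ≤ D)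
    {r : X → ℝ} {U : Set X} (hr : ∀ q ∈ U, r q ≤ rM) (hr0 : ∀ q ∈ U, 0 ≤ r q) :
    ∀ n : ℕ, ∀ x0 ∈ U, rM * C ^ n ≤ r x0 →
      ∃ p ∈ U, r x0 ≤ r p ∧ dist x0 p ≤ D * n ∧ ∀ q ∈ U, dist p q < D → C * r q ≤ r p := by
  intro n
  induction n with
  | zero =>
    intro x0 hx0 hle
    refine ⟨x0, hx0, le_rfl, by simp [dist_self], ?_⟩
    intro q hq _
    have h1 : r q ≤ rM := hr q hq
    have h2 : rM ≤ r x0 := by simpa using hle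
    nlinarith [hr0 q hq]
  | succ n ih =>
    intro x0 hx0 hle
    by_cases hgood : ∀ q ∈ U, dist x0 q < D → C * r q ≤ r x0
    · exact ⟨x0, hx0, le_rfl, by simp [dist_self]; positivity, hgood⟩
    · push_neg at hgood
      obtain ⟨q, hq, hqd, hqr⟩ := hgood
      have hq' : rM * C ^ n ≤ r q := by
        have h1 : rM * C ^ (n+1) < C * r q := lt_of_le_of_lt hle hqr
        have h2 : C * (rM * C ^ n) < C * r q := by
          calc C * (rM * C ^ n) = rM * C ^ (n+1) := by ring
          _ < C * r q := h1
        exact le_of_lt (lt_of_mul_lt_mul_left h2 hC0.le)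
      obtain ⟨p, hpU, hrp, hdp, hsep⟩ := ih q hq hq'
      refine ⟨p, hpU, ?_, ?_, hsep⟩
      · have : r x0 < C * r q := hqr
        nlinarith [hr0 q hq]
      · calc dist x0 p ≤ dist x0 q + dist q p := dist_triangle _ _ _
        _ ≤ D + D * n := by linarith
        _ = D * ((n:ℝ)+1) := by ring
        _ = D * ((n+1 : ℕ) : ℝ) := by push_cast; ring

noncomputable def sel (Φ : Set X → X → Prop) (U : Set X) : Option X :=
  @dite _ (∃ p, Φ U p) (Classical.propDecidable _) (fun h => some h.choose) (fun _ => none)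

lemma sel_spec {Φ : Set X → X → Prop} {U : Set X} {p : X} (h : sel Φ U = some p) : Φ U p := by
  unfold sel at h
  rcases Classical.em (∃ p, Φ U p) with hh | hh
  · rw [dif_pos hh] at h
    obtain rfl : hh.choose = p := Option.some_injective _ h
    exact hh.choose_spec
  · rw [dif_neg hh] at h
    exact absurd h (by simp)

lemma sel_isSome {Φ : Set X → X → Prop} {U : Set X} (h : ∃ p, Φ U p) :
    ∃ p, sel Φ U = some p := by
  unfold sel; rw [dif_pos h]; exact ⟨h.choose, rfl⟩

noncomputable def Useq (Φ : Set X → X → Prop) (r : X → ℝ) (Γ : Set X) : ℕ → Set X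
  | 0 => Γ
  | n+1 =>
    match sel Φ (Useq Φ r Γ n) with
    | none => Useq Φ r Γ n
    | some p => Useq Φ r Γ n \ Metric.ball p (r p)

variable {Φ : Set X → X → Prop} {r : X → ℝ} {Γ : Set X}

lemma Useq_succ_none {n : ℕ} (h : sel Φ (Useq Φ r Γ n) = none) :
    Useq Φ r Γ (n+1) = Useq Φ r Γ n := by
  simp [Useq, h]

lemma Useq_succ_some {n : ℕ} {p : X} (h : sel Φ (Useq Φ r Γ n) = some p) :
    Useq Φ r Γ (n+1) = Useq Φ r Γ n \ Metric.ball p (r p) := by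
  simp [Useq, h]

lemma Useq_succ_subset {n : ℕ} : Useq Φ r Γ (n+1) ⊆ Useq Φ r Γ n := by
  cases h : sel Φ (Useq Φ r Γ n) with
  | none => rw [Useq_succ_none h]
  | some p => rw [Useq_succ_some h]; exact Set.diff_subset

lemma Useq_mono {m n : ℕ} (h : m ≤ n) : Useq Φ r Γ n ⊆ Useq Φ r Γ m := by
  induction n, h using Nat.le_induction with
  | base => exact le_rfl
  | succ n hmn ih => exact (Useq_succ_subset).trans ih

lemma Useq_subset_base {n : ℕ} : Useq Φ r Γ n ⊆ Γ := Useq_mono (Nat.zero_le n)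

lemma comp_lemma {Γ : Set X} {η : X → ℝ} {A : ℝ} (hA : 2 ≤ A)
    (hpos : ∀ p ∈ Γ, 0 < η p)
    (hslow : ∀ ε : ℝ, 0 < ε → ε < 1/2 → ∀ p ∈ Γ, ∀ q ∈ Γ, dist p q < ε * η p →
      (1 - ε) * η p ≤ η q ∧ η q ≤ (1 - ε) / (1 - 2*ε) * η p)
    {p q : X} (hp : p ∈ Γ) (hq : q ∈ Γ) (hd : dist p q < (η p + η q) / (2*A)) :
    (A - 1)/A * η p ≤ η q := by
  have hp0 := hpos p hp
  have hq0 := hpos q hq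
  have hA0 : (0:ℝ) < A := by linarith
  rcases le_or_gt (η p) (η q) with h | h
  · have h1 : (A-1)/A ≤ 1 := by rw [div_le_one hA0]; linarith
    nlinarith
  · set ε := (η p + η q) / (2*A*η p) with hε
    have hε0 : 0 < ε := by positivity
    have hεA : ε < 1/A := by
      rw [hε, div_lt_div_iff₀ (by positivity) hA0]
      nlinarith
    have hhalf : 1/A ≤ 1/2 := by
      apply one_div_le_one_div_of_le <;> linarith
    have hεhalf : ε < 1/2 := lt_of_lt_of_le hεA hhalf
    have hdist : dist p q < ε * η p := by
      have heq : ε * η p = (η p + η q) / (2*A) := by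
        rw [hε, div_mul_eq_mul_div, mul_div_mul_right _ _ hp0.ne']
      rw [heq]; exact hd
    have hlow := (hslow ε hε0 hεhalf p hp q hq hdist).1
    have h1A : (A-1)/A = 1 - 1/A := by field_simp
    rw [h1A]
    calc (1 - 1/A) * η p ≤ (1 - ε) * η p := by
          apply mul_le_mul_of_nonneg_right (by linarith [hεA.le]) hp0.le
    _ ≤ η q := hlow



noncomputable def delta (r : X → ℝ) (Γ : Set X) (q0 : X) (m : ℕ) : ℝ :=
  sInf (r '' (Γ ∩ Metric.closedBall q0 (m:ℝ)))

noncomputable def stage (q0 : X) (U : Set X) : ℕ :=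
  sInf {m : ℕ | (U ∩ Metric.closedBall q0 (m:ℝ)).Nonempty}

noncomputable def NN (C rM : ℝ) (r : X → ℝ) (Γ : Set X) (q0 : X) (m : ℕ) : ℕ :=
  sInf {n : ℕ | rM * C ^ n ≤ delta r Γ q0 m}

def Phi (C rM : ℝ) (r : X → ℝ) (Γ : Set X) (q0 : X) (U : Set X) (p : X) : Prop :=
  p ∈ U ∧ (∀ q ∈ U, dist p q < 2*rM → C * r q ≤ r p) ∧
    delta r Γ q0 (stage q0 U) ≤ r p ∧
    dist q0 p ≤ (stage q0 U : ℝ) + 2*rM * (NN C rM r Γ q0 (stage q0 U))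

theorem main {X : Type*} [MetricSpace X] [ProperSpace X]
    (Γ : Set X) (hΓc : IsClosed Γ) (q0 : X) (hq0 : q0 ∈ Γ)
    (r : X → ℝ) (hcont : ContinuousOn r Γ)
    (rM : ℝ) (hrle : ∀ p ∈ Γ, r p ≤ rM)
    (hrpos : ∀ p ∈ Γ, 0 < r p)
    (C : ℝ) (hC0 : 0 < C) (hC1 : C < 1) :
    ∃ S : Set X, S.Countable ∧ S ⊆ Γ ∧
      (Γ ⊆ ⋃ p ∈ S, Metric.ball p (r p)) ∧
      (∀ R : ℝ, {p ∈ S | dist q0 p ≤ R}.Finite) ∧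
      (∀ p ∈ S, ∀ q ∈ S, p ≠ q → dist p q < 2 * rM →
        (r p ≤ dist p q ∧ C * r q ≤ r p) ∨ (r q ≤ dist p q ∧ C * r p ≤ r q)) := by
  classical
  have hrM0 : 0 < rM := lt_of_lt_of_le (hrpos q0 hq0) (hrle q0 hq0)
  -- abbreviations (as plain defs applied)
  -- (1) delta is a lower bound attained on the compact piece
  have hdelta_le : ∀ (m : ℕ), ∀ x ∈ Γ, dist q0 x ≤ (m:ℝ) → delta r Γ q0 m ≤ r x := by
    intro m x hx hdx
    apply csInf_le
    · exact ⟨0, fun y hy => by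
        obtain ⟨z, hz, rfl⟩ := hy
        exact (hrpos z hz.1).le⟩
    · exact ⟨x, ⟨hx, by simpa [Metric.mem_closedBall, dist_comm] using hdx⟩, rfl⟩
  have hdelta_pos : ∀ m : ℕ, (Γ ∩ Metric.closedBall q0 (m:ℝ)).Nonempty →
      0 < delta r Γ q0 m := by
    intro m hne
    have hcomp : IsCompact (Γ ∩ Metric.closedBall q0 (m:ℝ)) :=
      (isCompact_closedBall q0 (m:ℝ)).inter_left hΓc
    obtain ⟨z, hz, hzmin⟩ := hcomp.exists_isMinOn hne (hcont.mono Set.inter_subset_left)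
    calc (0:ℝ) < r z := hrpos z hz.1
    _ ≤ delta r Γ q0 m := le_csInf (hne.image r) (fun b hb => by
        obtain ⟨y, hy, rfl⟩ := hb
        exact hzmin hy)
  have hstage_mem : ∀ U : Set X, U.Nonempty →
      (U ∩ Metric.closedBall q0 (stage q0 U : ℝ)).Nonempty := by
    intro U hU
    have hne : {m : ℕ | (U ∩ Metric.closedBall q0 (m:ℝ)).Nonempty}.Nonempty := by
      obtain ⟨u, hu⟩ := hU
      exact ⟨⌈dist q0 u⌉₊, ⟨u, hu, by
        simpa [Metric.mem_closedBall, dist_comm] using Nat.le_ceil (dist q0 u)⟩⟩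
    exact Nat.sInf_mem hne
  have hstage_le : ∀ (U : Set X) (m : ℕ),
      (U ∩ Metric.closedBall q0 (m:ℝ)).Nonempty → stage q0 U ≤ m :=
    fun U m h => Nat.sInf_le h
  -- (2) existence of a selectable point
  have hexists : ∀ U : Set X, U ⊆ Γ → U.Nonempty → ∃ p, Phi C rM r Γ q0 U p := by
    intro U hUΓ hU
    obtain ⟨x0, hx0U, hx0b⟩ := hstage_mem U hU
    have hx0Γ : x0 ∈ Γ := hUΓ hx0U
    have hx0d : dist q0 x0 ≤ (stage q0 U : ℝ) := by
      simpa [Metric.mem_closedBall, dist_comm] using hx0b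
    have hδx0 : delta r Γ q0 (stage q0 U) ≤ r x0 := hdelta_le _ x0 hx0Γ hx0d
    have hδpos : 0 < delta r Γ q0 (stage q0 U) :=
      hdelta_pos _ ⟨x0, hx0Γ, hx0b⟩
    have hNNmem : rM * C ^ (NN C rM r Γ q0 (stage q0 U)) ≤ delta r Γ q0 (stage q0 U) := by
      have hsetne : {n : ℕ | rM * C ^ n ≤ delta r Γ q0 (stage q0 U)}.Nonempty := by
        obtain ⟨n, hn⟩ := exists_pow_lt_of_lt_one (div_pos hδpos hrM0) hC1
        refine ⟨n, ?_⟩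
        simp only [Set.mem_setOf_eq]
        have := (lt_div_iff₀ hrM0).1 hn
        nlinarith
      exact Nat.sInf_mem hsetne
    obtain ⟨p, hpU, hrx0p, hdistp, hsep⟩ :=
      Stmt3Aux.chain hC0 hC1 (by positivity : (0:ℝ) ≤ 2*rM)
        (fun q hq => hrle q (hUΓ hq)) (fun q hq => (hrpos q (hUΓ hq)).le)
        (NN C rM r Γ q0 (stage q0 U)) x0 hx0U (le_trans hNNmem hδx0)
    refine ⟨p, hpU, hsep, le_trans hδx0 hrx0p, ?_⟩
    calc dist q0 p ≤ dist q0 x0 + dist x0 p := dist_triangle _ _ _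
    _ ≤ (stage q0 U : ℝ) + 2*rM * (NN C rM r Γ q0 (stage q0 U)) := add_le_add hx0d hdistp
  -- the process
  have hPspec : ∀ n p, sel (Phi C rM r Γ q0) (Useq (Phi C rM r Γ q0) r Γ n) = some p →
      Phi C rM r Γ q0 (Useq (Phi C rM r Γ q0) r Γ n) p := fun n p h => Stmt3Aux.sel_spec h
  have hUsub : ∀ n, Useq (Phi C rM r Γ q0) r Γ n ⊆ Γ := fun n => Stmt3Aux.Useq_subset_base
  have hPsome : ∀ n, (Useq (Phi C rM r Γ q0) r Γ n).Nonempty →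
      ∃ p, sel (Phi C rM r Γ q0) (Useq (Phi C rM r Γ q0) r Γ n) = some p :=
    fun n h => Stmt3Aux.sel_isSome (hexists _ (hUsub n) h)
  have hPmem : ∀ n p, sel (Phi C rM r Γ q0) (Useq (Phi C rM r Γ q0) r Γ n) = some p →
      p ∈ Useq (Phi C rM r Γ q0) r Γ n := fun n p h => (hPspec n p h).1
  have hexcl : ∀ i k, i < k → ∀ p x,
      sel (Phi C rM r Γ q0) (Useq (Phi C rM r Γ q0) r Γ i) = some p →
      x ∈ Useq (Phi C rM r Γ q0) r Γ k → r p ≤ dist p x := by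
    intro i k hik p x hPi hxk
    have h1 : Useq (Phi C rM r Γ q0) r Γ (i+1) =
        Useq (Phi C rM r Γ q0) r Γ i \ Metric.ball p (r p) := Stmt3Aux.Useq_succ_some hPi
    have hx' : x ∈ Useq (Phi C rM r Γ q0) r Γ (i+1) :=
      Stmt3Aux.Useq_mono (Nat.succ_le_of_lt hik) hxk
    rw [h1] at hx'
    have h2 : ¬ dist x p < r p := by simpa [Metric.mem_ball] using hx'.2
    rw [dist_comm]
    exact not_lt.1 h2
  -- the chosen points as a function
  set f : ℕ → X := fun n => (sel (Phi C rM r Γ q0) (Useq (Phi C rM r Γ q0) r Γ n)).getD q0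
    with hf
  -- levels are finite
  have hTfin : ∀ m : ℕ, {n : ℕ | (Useq (Phi C rM r Γ q0) r Γ n).Nonempty ∧
      stage q0 (Useq (Phi C rM r Γ q0) r Γ n) = m}.Finite := by
    intro m
    set T := {n : ℕ | (Useq (Phi C rM r Γ q0) r Γ n).Nonempty ∧
      stage q0 (Useq (Phi C rM r Γ q0) r Γ n) = m} with hT
    rcases Set.eq_empty_or_nonempty T with hTe | hTne
    · rw [hTe]; exact Set.finite_empty
    obtain ⟨n0, hn0⟩ := hTne
    have hδpos : 0 < delta r Γ q0 m := by
      obtain ⟨x0, hx0U, hx0b⟩ := hstage_mem _ hn0.1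
      rw [hn0.2] at hx0b
      exact hdelta_pos m ⟨x0, hUsub _ hx0U, hx0b⟩
    have hfP : ∀ n ∈ T, sel (Phi C rM r Γ q0) (Useq (Phi C rM r Γ q0) r Γ n) = some (f n) := by
      intro n hn
      obtain ⟨p, hp⟩ := hPsome n hn.1
      simp [hf, hp]
    have hsepT : ∀ i ∈ T, ∀ k ∈ T, i ≠ k → delta r Γ q0 m ≤ dist (f i) (f k) := by
      have key : ∀ i ∈ T, ∀ k ∈ T, i < k → delta r Γ q0 m ≤ dist (f i) (f k) := by
        intro i hi k hk hik
        have h1 := hexcl i k hik (f i) (f k) (hfP i hi) (hPmem k _ (hfP k hk))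
        have h2 : delta r Γ q0 m ≤ r (f i) := by
          have h3 := (hPspec i _ (hfP i hi)).2.2.1
          rw [hi.2] at h3
          exact h3
        linarith
      intro i hi k hk hik
      rcases lt_or_gt_of_ne hik with h | h
      · exact key i hi k hk h
      · rw [dist_comm]; exact key k hk i hi h
    have hbddT : ∀ n ∈ T, f n ∈ Metric.closedBall q0 ((m:ℝ) + 2*rM * (NN C rM r Γ q0 m)) := by
      intro n hn
      have h3 := (hPspec n _ (hfP n hn)).2.2.2
      rw [hn.2] at h3
      simpa [Metric.mem_closedBall, dist_comm] using h3
    have himfin : (f '' T).Finite := by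
      apply Stmt3Aux.finite_of_separated hδpos
      · exact Metric.isBounded_closedBall.subset (by
          rintro _ ⟨n, hn, rfl⟩; exact hbddT n hn)
      · rintro _ ⟨i, hi, rfl⟩ _ ⟨k, hk, rfl⟩ hne
        refine hsepT i hi k hk ?_
        rintro rfl; exact hne rfl
    have hinj : Set.InjOn f T := by
      intro i hi k hk heq
      by_contra hne
      have := hsepT i hi k hk hne
      rw [heq, dist_self] at this
      linarith
    exact Set.Finite.of_finite_image himfin hinj
  -- the set S
  refine ⟨{p | ∃ n, sel (Phi C rM r Γ q0) (Useq (Phi C rM r Γ q0) r Γ n) = some p},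
    ?_, ?_, ?_, ?_, ?_⟩
  · -- countable
    apply Set.Countable.mono ?_ (Set.countable_range f)
    rintro p ⟨n, hn⟩
    exact ⟨n, by simp [hf, hn]⟩
  · -- subset of Γ
    rintro p ⟨n, hn⟩
    exact hUsub n (hPmem n p hn)
  · -- covering
    intro x hx
    by_cases hall : ∀ n, x ∈ Useq (Phi C rM r Γ q0) r Γ n
    · exfalso
      have hsub : (Set.univ : Set ℕ) ⊆ ⋃ m ∈ Finset.range (⌈dist q0 x⌉₊ + 1),
          {n : ℕ | (Useq (Phi C rM r Γ q0) r Γ n).Nonempty ∧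
            stage q0 (Useq (Phi C rM r Γ q0) r Γ n) = m} := by
        intro n _
        have hxn := hall n
        have h2 : stage q0 (Useq (Phi C rM r Γ q0) r Γ n) ≤ ⌈dist q0 x⌉₊ :=
          hstage_le _ _ ⟨x, hxn, by
            simpa [Metric.mem_closedBall, dist_comm] using Nat.le_ceil (dist q0 x)⟩
        simp only [Set.mem_iUnion]
        exact ⟨stage q0 (Useq (Phi C rM r Γ q0) r Γ n),
          Finset.mem_range.2 (Nat.lt_succ_of_le h2), ⟨x, hxn⟩, rfl⟩
      exact Set.infinite_univ (Set.Finite.subset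
        (Set.Finite.biUnion (Finset.range (⌈dist q0 x⌉₊ + 1)).finite_toSet
          (fun m _ => hTfin m)) hsub)
    · push_neg at hall
      obtain ⟨n, hxn, hmin⟩ : ∃ n, x ∉ Useq (Phi C rM r Γ q0) r Γ n ∧
          ∀ j < n, x ∈ Useq (Phi C rM r Γ q0) r Γ j :=
        ⟨Nat.find hall, Nat.find_spec hall, fun j hj => not_not.1 (Nat.find_min hall hj)⟩
      cases n with
      | zero => exact absurd hx hxn
      | succ j =>
        have hj : x ∈ Useq (Phi C rM r Γ q0) r Γ j := hmin j (Nat.lt_succ_self j)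
        cases hP : sel (Phi C rM r Γ q0) (Useq (Phi C rM r Γ q0) r Γ j) with
        | none =>
          rw [Stmt3Aux.Useq_succ_none hP] at hxn
          exact absurd hj hxn
        | some p =>
          rw [Stmt3Aux.Useq_succ_some hP] at hxn
          have hxb : x ∈ Metric.ball p (r p) := by
            by_contra hb
            exact hxn ⟨hj, hb⟩
          exact Set.mem_biUnion ⟨j, hP⟩ hxb
  · -- local finiteness
    intro R
    have hsub : {p ∈ {p | ∃ n, sel (Phi C rM r Γ q0) (Useq (Phi C rM r Γ q0) r Γ n) = some p} |
        dist q0 p ≤ R} ⊆ f '' (⋃ m ∈ Finset.range (⌈R⌉₊ + 1),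
          {n : ℕ | (Useq (Phi C rM r Γ q0) r Γ n).Nonempty ∧
            stage q0 (Useq (Phi C rM r Γ q0) r Γ n) = m}) := by
      rintro p ⟨⟨n, hn⟩, hpR⟩
      have hpU := hPmem n p hn
      have h2 : stage q0 (Useq (Phi C rM r Γ q0) r Γ n) ≤ ⌈R⌉₊ :=
        hstage_le _ _ ⟨p, hpU, by
          simp only [Metric.mem_closedBall, dist_comm q0 p] at *
          exact le_trans hpR (le_trans (Nat.le_ceil R) (by norm_num))⟩
      refine ⟨n, ?_, by simp [hf, hn]⟩
      simp only [Set.mem_iUnion]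
      exact ⟨stage q0 (Useq (Phi C rM r Γ q0) r Γ n),
        Finset.mem_range.2 (Nat.lt_succ_of_le h2), ⟨p, hpU⟩, rfl⟩
    exact Set.Finite.subset (Set.Finite.image f
      (Set.Finite.biUnion (Finset.range (⌈R⌉₊ + 1)).finite_toSet (fun m _ => hTfin m))) hsub
  · -- pair properties
    rintro p ⟨i, hi⟩ q ⟨k, hk⟩ hpq hd
    have hik : i ≠ k := by
      rintro rfl
      rw [hi] at hk
      exact hpq (Option.some_injective _ hk)
    rcases lt_or_gt_of_ne hik with h | h
    · left
      refine ⟨hexcl i k h p q hi (hPmem k q hk), ?_⟩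
      exact (hPspec i p hi).2.1 q (Stmt3Aux.Useq_mono (le_of_lt h) (hPmem k q hk)) hd
    · right
      constructor
      · rw [dist_comm]
        exact hexcl k i h q p hk (hPmem i p hi)
      · exact (hPspec k q hk).2.1 p (Stmt3Aux.Useq_mono (le_of_lt h) (hPmem i p hi))
          (by rw [dist_comm]; exact hd)

end Stmt3Aux


/-- **Covering theorem** (Theorem 2.15 of the paper).  Let `Γ ⊆ ℝ^d` be nonempty and closed and
let `η : Γ → ℝ` be continuous, bounded, strictly positive and slowly varying in the sense that
`|p-q| < ε η(p)` implies `(1-ε) η(p) ≤ η(q) ≤ (1-ε)/(1-2ε) η(p)`.  With `η' := 2^{-K} η`,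
`K ≥ 2`, for every `C ∈ (0,1)` there is a countable set `S ⊆ Γ` of centers such that the balls
`B(p, η'(p))`, `p ∈ S`, cover `Γ`, form a locally finite family, and any two intersecting balls
have comparable radii and centers at distance between `C·max` and
`(2^K-1)/(2^{K-1}-1)·min` of the two radii. -/
theorem stmt3 (d : ℕ) (hd : 1 ≤ d) (Γ : Set (EuclideanSpace ℝ (Fin d)))
    (hΓc : IsClosed Γ) (hΓne : Γ.Nonempty)
    (η : EuclideanSpace ℝ (Fin d) → ℝ)
    (hcont : ContinuousOn η Γ)
    (hbdd : ∃ M : ℝ, ∀ p ∈ Γ, η p ≤ M)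
    (hpos : ∀ p ∈ Γ, 0 < η p)
    (hslow : ∀ ε : ℝ, 0 < ε → ε < 1/2 → ∀ p ∈ Γ, ∀ q ∈ Γ, dist p q < ε * η p →
      (1 - ε) * η p ≤ η q ∧ η q ≤ (1 - ε) / (1 - 2*ε) * η p)
    (K : ℕ) (hK : 2 ≤ K) :
    ∀ C : ℝ, 0 < C → C < 1 →
      ∃ S : Set (EuclideanSpace ℝ (Fin d)), S.Countable ∧ S ⊆ Γ ∧
        (Γ ⊆ ⋃ p ∈ S, Metric.ball p (η p / 2 ^ K)) ∧
        (∀ B : Set (EuclideanSpace ℝ (Fin d)), Bornology.IsBounded B →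
          {p ∈ S | (Metric.ball p (η p / 2 ^ K) ∩ B).Nonempty}.Finite) ∧
        (∀ p ∈ S, ∀ q ∈ S, p ≠ q →
          (Metric.ball p (η p / 2 ^ K) ∩ Metric.ball q (η q / 2 ^ K)).Nonempty →
          (((2:ℝ) ^ (K-1) - 1) / 2 ^ (K-1) * (η p / 2 ^ K) ≤ η q / 2 ^ K ∧
           η q / 2 ^ K ≤ (2:ℝ) ^ (K-1) / ((2:ℝ) ^ (K-1) - 1) * (η p / 2 ^ K) ∧
           C * max (η p / 2 ^ K) (η q / 2 ^ K) ≤ dist p q ∧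
           dist p q ≤ ((2:ℝ) ^ K - 1) / ((2:ℝ) ^ (K-1) - 1) *
             min (η p / 2 ^ K) (η q / 2 ^ K))) := by
  obtain ⟨k₁, rfl⟩ : ∃ k₁, K = k₁ + 1 := ⟨K - 1, by omega⟩
  have hk₁ : 1 ≤ k₁ := by omega
  intro C hC0 hC1
  classical
  obtain ⟨q0, hq0⟩ := hΓne
  obtain ⟨M, hM⟩ := hbdd
  have hM0 : 0 < M := lt_of_lt_of_le (hpos q0 hq0) (hM q0 hq0)
  have h2K : (0:ℝ) < 2 ^ (k₁+1) := by positivity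
  obtain ⟨S, hScount, hSΓ, hScover, hSfin, hSpair⟩ :=
    Stmt3Aux.main Γ hΓc q0 hq0 (fun p => η p / 2 ^ (k₁+1)) (hcont.div_const _)
      (M / 2 ^ (k₁+1))
      (fun p hp => (div_le_div_iff_of_pos_right h2K).2 (hM p hp))
      (fun p hp => div_pos (hpos p hp) h2K)
      C hC0 hC1
  refine ⟨S, hScount, hSΓ, hScover, ?_, ?_⟩
  · -- local finiteness
    intro B hB
    obtain ⟨R, hR⟩ := hB.subset_closedBall q0
    apply (hSfin (R + M / 2 ^ (k₁+1))).subset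
    rintro p ⟨hpS, y, hy1, hy2⟩
    refine ⟨hpS, ?_⟩
    have h1 : dist y p < η p / 2 ^ (k₁+1) := by simpa [Metric.mem_ball] using hy1
    have h3 : η p / 2 ^ (k₁+1) ≤ M / 2 ^ (k₁+1) := (div_le_div_iff_of_pos_right h2K).2 (hM p (hSΓ hpS))
    have h2 : dist y q0 ≤ R := hR hy2
    calc dist q0 p ≤ dist q0 y + dist y p := dist_triangle _ _ _
    _ ≤ R + M / 2 ^ (k₁+1) := add_le_add (by rw [dist_comm]; exact h2) (le_trans h1.le h3)
  · -- pair properties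
    intro p hp q hq hpq hint
    simp only [Nat.add_sub_cancel]
    obtain ⟨y, hy1, hy2⟩ := hint
    have hy1' : dist p y < η p / 2 ^ (k₁+1) := by
      rw [dist_comm]; simpa [Metric.mem_ball] using hy1
    have hy2' : dist y q < η q / 2 ^ (k₁+1) := by simpa [Metric.mem_ball] using hy2
    have hdpq : dist p q < η p / 2 ^ (k₁+1) + η q / 2 ^ (k₁+1) :=
      lt_of_le_of_lt (dist_triangle p y q) (add_lt_add hy1' hy2')
    have hpΓ := hSΓ hp
    have hqΓ := hSΓ hq
    have hp0 := hpos p hpΓ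
    have hq0' := hpos q hqΓ
    set A : ℝ := 2 ^ k₁ with hA_def
    have hA : 2 ≤ A := by
      calc (2:ℝ) = 2 ^ 1 := (pow_one 2).symm
      _ ≤ 2 ^ k₁ := pow_le_pow_right₀ (by norm_num) hk₁
    have hA0 : (0:ℝ) < A := by linarith
    have hA1 : (0:ℝ) < A - 1 := by linarith
    have h2KA : (2:ℝ) ^ (k₁+1) = 2 * A := by rw [hA_def, pow_succ]; ring
    have hsum : η p / 2 ^ (k₁+1) + η q / 2 ^ (k₁+1) = (η p + η q) / (2*A) := by
      rw [← h2KA]; rw [← add_div]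
    have hdsum : dist p q < (η p + η q) / (2*A) := by rw [← hsum]; exact hdpq
    have hcomp1 : (A-1)/A * η p ≤ η q :=
      Stmt3Aux.comp_lemma hA hpos hslow hpΓ hqΓ hdsum
    have hcomp2 : (A-1)/A * η q ≤ η p := by
      refine Stmt3Aux.comp_lemma hA hpos hslow hqΓ hpΓ ?_
      rw [dist_comm]
      have : (η q + η p) = (η p + η q) := by ring
      rw [this]
      exact hdsum
    have hup1 : η q ≤ A/(A-1) * η p := by
      have h := hcomp2
      rw [div_mul_eq_mul_div, div_le_iff₀ hA0] at h
      rw [div_mul_eq_mul_div, le_div_iff₀ hA1]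
      linarith
    have hup2 : η p ≤ A/(A-1) * η q := by
      have h := hcomp1
      rw [div_mul_eq_mul_div, div_le_iff₀ hA0] at h
      rw [div_mul_eq_mul_div, le_div_iff₀ hA1]
      linarith
    have hdD : dist p q < 2 * (M / 2 ^ (k₁+1)) := by
      have e1 : η p / 2 ^ (k₁+1) ≤ M / 2 ^ (k₁+1) := (div_le_div_iff_of_pos_right h2K).2 (hM p hpΓ)
      have e2 : η q / 2 ^ (k₁+1) ≤ M / 2 ^ (k₁+1) := (div_le_div_iff_of_pos_right h2K).2 (hM q hqΓ)
      linarith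
    have hdich := hSpair p hp q hq hpq hdD
    have hup0 : (0:ℝ) ≤ η p / 2 ^ (k₁+1) := by positivity
    have hvq0 : (0:ℝ) ≤ η q / 2 ^ (k₁+1) := by positivity
    refine ⟨?_, ?_, ?_, ?_⟩
    · have e : (A - 1) / A * (η p / 2 ^ (k₁+1)) = ((A-1)/A * η p) / 2 ^ (k₁+1) := by ring
      rw [e]
      exact (div_le_div_iff_of_pos_right h2K).2 hcomp1
    · have e : A / (A-1) * (η p / 2 ^ (k₁+1)) = (A/(A-1) * η p) / 2 ^ (k₁+1) := by ring
      rw [e]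
      exact (div_le_div_iff_of_pos_right h2K).2 hup1
    · rcases hdich with ⟨h1, h2⟩ | ⟨h1, h2⟩
      · rw [mul_max_of_nonneg _ _ hC0.le]
        apply max_le
        · nlinarith [mul_nonneg (sub_nonneg.2 hC1.le) hup0]
        · linarith
      · rw [mul_max_of_nonneg _ _ hC0.le]
        apply max_le
        · linarith
        · nlinarith [mul_nonneg (sub_nonneg.2 hC1.le) hvq0]
    · have hcoef : (0:ℝ) ≤ ((2:ℝ) ^ (k₁+1) - 1)/(A-1) := by
        apply div_nonneg _ hA1.le
        rw [h2KA]; linarith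
      rw [mul_min_of_nonneg _ _ hcoef]
      refine le_min ?_ ?_
      · have e1 : ((2:ℝ)^(k₁+1) - 1)/(A-1) * (η p / 2^(k₁+1)) =
            (η p + A/(A-1) * η p)/2^(k₁+1) := by
          rw [h2KA]; field_simp; ring
        rw [e1]
        have s2 : (η p + η q)/2^(k₁+1) ≤ (η p + A/(A-1)*η p)/2^(k₁+1) :=
          (div_le_div_iff_of_pos_right h2K).2 (by linarith)
        rw [hsum] at hdpq
        have e2 : (η p + η q)/(2*A) = (η p + η q)/2^(k₁+1) := by rw [h2KA]
        rw [e2] at hdpq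
        linarith
      · have e1 : ((2:ℝ)^(k₁+1) - 1)/(A-1) * (η q / 2^(k₁+1)) =
            (η q + A/(A-1) * η q)/2^(k₁+1) := by
          rw [h2KA]; field_simp; ring
        rw [e1]
        have s2 : (η p + η q)/2^(k₁+1) ≤ (η q + A/(A-1)*η q)/2^(k₁+1) :=
          (div_le_div_iff_of_pos_right h2K).2 (by linarith)
        rw [hsum] at hdpq
        have e2 : (η p + η q)/(2*A) = (η p + η q)/2^(k₁+1) := by rw [h2KA]
        rw [e2] at hdpq
        linarith
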